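/- Let J be the Jacobian of the reduced system f_S(S,R) = λ_S S(1-(S+R)/K) - αS + ξR, f_R(S,R) = λ_R R(1-(S+R)/K) + αS - ξR evaluated at the coexistence equilibrium (S*,R*) = (ξK/(α+ξ), αK/(α+ξ)). If λ_S, λ_R > 0 and α, ξ > 0, then trace(J) = -(ξλ_S + αλ_R)/(α+ξ) - α - ξ < 0 and det(J) = ξλ_S + αλ_R > 0. -/

import Mathlib

/-- Trace and determinant of the Jacobian of the reduced (S,R) kinetics at the
coexistence equilibrium: trace = -(ξλ_S+αλ_R)/(α+ξ) - α - ξ < 0 and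
det = ξλ_S + αλ_R > 0. -/
theorem jacobian_trace_det (lamS lamR K alpha xi : ℝ)
    (hlamS : 0 < lamS) (hlamR : 0 < lamR) (hK : 0 < K)
    (halpha : 0 < alpha) (hxi : 0 < xi) :
    let fS : ℝ → ℝ → ℝ := fun S R => lamS * S * (1 - (S + R) / K) - alpha * S + xi * R
    let fR : ℝ → ℝ → ℝ := fun S R => lamR * R * (1 - (S + R) / K) + alpha * S - xi * R
    let Sstar : ℝ := xi * K / (alpha + xi)
    let Rstar : ℝ := alpha * K / (alpha + xi)
    let a : ℝ := deriv (fun s => fS s Rstar) Sstar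
    let b : ℝ := deriv (fun r => fS Sstar r) Rstar
    let c : ℝ := deriv (fun s => fR s Rstar) Sstar
    let d : ℝ := deriv (fun r => fR Sstar r) Rstar
    a + d = -(xi * lamS + alpha * lamR) / (alpha + xi) - alpha - xi ∧
    a + d < 0 ∧
    a * d - b * c = xi * lamS + alpha * lamR ∧
    0 < a * d - b * c := by
  intro fS fR Sstar Rstar a b c d
  have hK' : K ≠ 0 := ne_of_gt hK
  have hax : alpha + xi ≠ 0 := by positivity
  have hSR : Sstar + Rstar = K := by
    simp only [Sstar, Rstar]; field_simp; ring
  -- derivative helpers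
  have g1 : HasDerivAt (fun s : ℝ => 1 - (s + Rstar) / K) (-(1 / K)) Sstar := by
    simpa using (((hasDerivAt_id Sstar).add_const Rstar).div_const K).const_sub 1
  have g2 : HasDerivAt (fun r : ℝ => 1 - (Sstar + r) / K) (-(1 / K)) Rstar := by
    simpa using (((hasDerivAt_id Rstar).const_add Sstar).div_const K).const_sub 1
  have ha : HasDerivAt (fun s => fS s Rstar)
      (lamS * (1 - (Sstar + Rstar) / K) + lamS * Sstar * (-(1 / K)) - alpha) Sstar := by
    have := ((((hasDerivAt_id Sstar).const_mul lamS).mul g1).sub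
      ((hasDerivAt_id Sstar).const_mul alpha)).add_const (xi * Rstar)
    convert this using 1; rfl; rfl; funext s; simp [fS]; simp [id]
  have hb : HasDerivAt (fun r => fS Sstar r)
      (lamS * Sstar * (-(1 / K)) + xi) Rstar := by
    have := ((g2.const_mul (lamS * Sstar)).sub_const (alpha * Sstar)).add
      ((hasDerivAt_id Rstar).const_mul xi)
    simpa [fS, Pi.add_def] using this
  have hc : HasDerivAt (fun s => fR s Rstar)
      (lamR * Rstar * (-(1 / K)) + alpha) Sstar := by
    have := ((g1.const_mul (lamR * Rstar)).add
      ((hasDerivAt_id Sstar).const_mul alpha)).sub_const (xi * Rstar)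
    simpa [fR] using this
  have hd : HasDerivAt (fun r => fR Sstar r)
      (lamR * (1 - (Sstar + Rstar) / K) + lamR * Rstar * (-(1 / K)) - xi) Rstar := by
    have := ((((hasDerivAt_id Rstar).const_mul lamR).mul g2).add_const
      (alpha * Sstar)).sub ((hasDerivAt_id Rstar).const_mul xi)
    convert this using 1; rfl; rfl; funext r; simp [fR]; simp [id]
  have haK : (1 - (Sstar + Rstar) / K) = 0 := by rw [hSR]; field_simp; norm_num
  have ea : a = -(lamS * xi / (alpha + xi)) - alpha := by
    simp only [a, ha.deriv, haK, Sstar]; field_simp; ring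
  have eb : b = -(lamS * xi / (alpha + xi)) + xi := by
    simp only [b, hb.deriv, Sstar]; field_simp
  have ec : c = -(lamR * alpha / (alpha + xi)) + alpha := by
    simp only [c, hc.deriv, Rstar]; field_simp
  have ed : d = -(lamR * alpha / (alpha + xi)) - xi := by
    simp only [d, hd.deriv, haK, Rstar]; field_simp; ring
  have tr : a + d = -(xi * lamS + alpha * lamR) / (alpha + xi) - alpha - xi := by
    rw [ea, ed]; field_simp; ring
  have det : a * d - b * c = xi * lamS + alpha * lamR := by
    rw [ea, eb, ec, ed]; field_simp; ring
  refine ⟨tr, ?_, det, ?_⟩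
  · rw [tr, neg_div]
    have h1 : 0 < (xi * lamS + alpha * lamR) / (alpha + xi) := by positivity
    linarith
  · rw [det]; positivity
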